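/- arXiv:1403.1457 — 6 statements merged into one kernel-verified Lean document; each statement's English description precedes it below -/
import Mathlib

section
/- (Watson's identity) Let e_1, …, e_n be vectors of a real inner product space, let a_1, …, a_n be integers and let d > 1 be an integer, and set e = (a_1 e_1 + ⋯ + a_n e_n)/d. Then Σ_{i=1}^n |a_i|·(N(e − sgn(a_i)·e_i) − N(e_i)) = ((Σ_{i=1}^n |a_i|) − 2d)·N(e), where sgn(λ) is −1, 0 or 1 according as λ is negative, zero or positive. -/
open scoped BigOperators
noncomputable section

variable {F : Type*} [NormedAddCommGroup F] [InnerProductSpace ℝ F]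

/-- `Nm x = ⟪x, x⟫`, the square of the usual norm. -/
def Nm (x : F) : ℝ := inner ℝ x x

/-- Watson's identity: for vectors `e₁,…,eₙ`, integers `a₁,…,aₙ`,
an integer `d > 1` and `e = (a₁e₁ + ⋯ + aₙeₙ)/d`, one has
`Σᵢ |aᵢ|·(N(e - sgn(aᵢ)·eᵢ) - N(eᵢ)) = ((Σᵢ |aᵢ|) - 2d)·N(e)`. -/
theorem watson_identity (n : ℕ) (e : Fin n → F) (a : Fin n → ℤ) (d : ℤ) (hd : 1 < d)
    (v : F) (hv : v = ((d : ℝ))⁻¹ • ∑ i, (a i : ℝ) • e i) :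
    ∑ i, (|a i| : ℝ) * (Nm (v - ((a i).sign : ℝ) • e i) - Nm (e i)) =
      ((∑ i, (|a i| : ℝ)) - 2 * (d : ℝ)) * Nm v := by
  have hd0 : (d : ℝ) ≠ 0 := by
    exact_mod_cast (by omega : d ≠ 0)
  have hsum : (∑ i, (a i : ℝ) • e i) = (d : ℝ) • v := by
    rw [hv, smul_inv_smul₀ hd0]
  have key : ∀ i, (|a i| : ℝ) * (Nm (v - ((a i).sign : ℝ) • e i) - Nm (e i)) =
      (|a i| : ℝ) * Nm v - 2 * ((a i : ℝ) * (inner ℝ v (e i) : ℝ)) := by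
    intro i
    rcases eq_or_ne (a i) 0 with h | h
    · simp [h, Nm]
    · have hs : ((a i).sign : ℝ) * ((a i).sign : ℝ) = 1 := by
        rcases h.lt_or_gt with h' | h'
        · simp [Int.sign_eq_neg_one_of_neg h']
        · simp [Int.sign_eq_one_of_pos h']
      have hsa : (|a i| : ℝ) * ((a i).sign : ℝ) = (a i : ℝ) := by
        have := Int.sign_mul_abs (a i)
        rw [mul_comm]
        exact_mod_cast this
      simp only [Nm, inner_sub_left, inner_sub_right, real_inner_smul_left,
        real_inner_smul_right, real_inner_comm (e i) v]
      linear_combination (|(a i : ℝ)| * (inner ℝ (e i) (e i) : ℝ)) * hs - 2 * (inner ℝ (e i) v : ℝ) * hsa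
  simp only [key]
  rw [Finset.sum_sub_distrib, ← Finset.sum_mul, ← Finset.mul_sum]
  have h2 : ∑ i, (a i : ℝ) * (inner ℝ v (e i) : ℝ) = (d : ℝ) * Nm v := by
    have := congrArg (fun w => (inner ℝ v w : ℝ)) hsum
    simpa [inner_sum, real_inner_smul_right, Nm, mul_comm] using this
  rw [h2]
  ring

end
end

section
/- (Crude bound) Let e_1, …, e_n be vectors of a real inner product space such that 2·(e_i ⬝ e_j) ≤ N(e_i) for all i < j (equivalently, N(e_j − e_i) ≥ N(e_j) for all i < j), let a_1, …, a_n be nonnegative real numbers and d > 0. Then N((a_1 e_1 + ⋯ + a_n e_n)/d) ≤ (Σ_{i=1}^n a_i·N(e_i)·Σ_{j=i}^n a_j)/d². -/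
open scoped BigOperators
noncomputable section

variable {F : Type*} [NormedAddCommGroup F] [InnerProductSpace ℝ F]

/-- crude bound: if `2·⟪eᵢ, eⱼ⟫ ≤ N(eᵢ)` for all `i < j`, the `aᵢ`
are nonnegative reals and `d > 0`, then
`N((a₁e₁+⋯+aₙeₙ)/d) ≤ (Σᵢ aᵢ·N(eᵢ)·Σ_{j≥i} aⱼ)/d²`. -/
theorem crude_bound (n : ℕ) (e : Fin n → F)
    (h : ∀ i j : Fin n, i < j → 2 * (inner ℝ (e i) (e j) : ℝ) ≤ Nm (e i))
    (a : Fin n → ℝ) (ha : ∀ i, 0 ≤ a i) (d : ℝ) (hd : 0 < d) :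
    Nm (d⁻¹ • ∑ i, a i • e i) ≤
      (∑ i, a i * Nm (e i) * ∑ j ∈ Finset.univ.filter fun j => i ≤ j, a j) / d ^ 2 := by
  have key : (inner ℝ (∑ i, a i • e i) (∑ i, a i • e i) : ℝ) ≤
      ∑ i, a i * Nm (e i) * ∑ j ∈ Finset.univ.filter fun j => i ≤ j, a j := by
    rw [sum_inner]
    have expand : (∑ i, inner ℝ (a i • e i) (∑ j, a j • e j) : ℝ)
        = ∑ i, ∑ j, a i * a j * (inner ℝ (e i) (e j) : ℝ) := by
      simp only [inner_sum, real_inner_smul_left, real_inner_smul_right]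
      exact Finset.sum_congr rfl fun i _ => Finset.sum_congr rfl fun j _ => by ring
    rw [expand]
    -- split each inner sum into j ≥ i and j < i
    have split : ∀ i : Fin n, (∑ j, a i * a j * (inner ℝ (e i) (e j) : ℝ))
        = (∑ j ∈ Finset.univ.filter fun j => i ≤ j, a i * a j * (inner ℝ (e i) (e j) : ℝ))
          + ∑ j ∈ Finset.univ.filter fun j => j < i, a i * a j * (inner ℝ (e i) (e j) : ℝ) := by
      intro i
      rw [← Finset.sum_filter_add_sum_filter_not Finset.univ (fun j => i ≤ j)]
      simp [not_le]
    simp_rw [split]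
    rw [Finset.sum_add_distrib]
    -- swap the second double sum
    have swap : (∑ i, ∑ j ∈ Finset.univ.filter fun j => j < i,
          a i * a j * (inner ℝ (e i) (e j) : ℝ))
        = ∑ i, ∑ j ∈ Finset.univ.filter fun j => i < j,
            a i * a j * (inner ℝ (e i) (e j) : ℝ) := by
      rw [Finset.sum_comm' (s' := fun j => Finset.univ.filter fun i => j < i)
        (t' := Finset.univ)]
      · refine Finset.sum_congr rfl fun j _ => Finset.sum_congr rfl fun i hi => ?_
        rw [real_inner_comm]; ring
      · intro x y; simp
    rw [swap, ← Finset.sum_add_distrib]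
    refine Finset.sum_le_sum fun i _ => ?_
    -- split the "i ≤ j" sum into j = i and j > i
    have hins : (Finset.univ.filter fun j => i ≤ j)
        = insert i (Finset.univ.filter fun j => i < j) := by
      ext j; simp [eq_comm, le_iff_eq_or_lt]
    rw [hins, Finset.sum_insert (by simp), Finset.sum_insert (by simp), mul_add,
      Finset.mul_sum, add_assoc]
    have hii : a i * a i * (inner ℝ (e i) (e i) : ℝ) = a i * Nm (e i) * a i := by
      rw [Nm]; ring
    refine add_le_add (le_of_eq hii) ?_
    rw [← Finset.sum_add_distrib]
    refine Finset.sum_le_sum fun j hj => ?_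
    have hij : i < j := by simpa using hj
    have h2 := h i j hij
    have : a i * a j * (inner ℝ (e i) (e j) : ℝ) + a i * a j * (inner ℝ (e i) (e j) : ℝ)
        = (a i * a j) * (2 * (inner ℝ (e i) (e j) : ℝ)) := by ring
    rw [this]
    calc (a i * a j) * (2 * (inner ℝ (e i) (e j) : ℝ))
        ≤ (a i * a j) * Nm (e i) := by
          exact mul_le_mul_of_nonneg_left h2 (mul_nonneg (ha i) (ha j))
      _ = a i * Nm (e i) * a j := by ring
  have hNm : Nm (d⁻¹ • ∑ i, a i • e i)
      = (inner ℝ (∑ i, a i • e i) (∑ i, a i • e i) : ℝ) / d ^ 2 := by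
    rw [Nm, real_inner_smul_left, real_inner_smul_right, pow_two, div_eq_mul_inv,
      mul_inv, mul_comm]
    ring
  rw [hNm]
  gcongr

end
end

section
/- Let e_1, …, e_n be vectors of a real inner product space with N(e_1) ≤ N(e_2) ≤ ⋯ ≤ N(e_n) and with N(e_j − e_i) ≥ N(e_j) for all i < j, let d > 0, and set e = (e_1 + ⋯ + e_n)/d. Then N(e) ≤ ((n+1)/(2d²))·(N(e_1) + ⋯ + N(e_n)) ≤ (n(n+1)/(2d²))·N(e_n). -/
open scoped BigOperators
noncomputable section

variable {F : Type*} [NormedAddCommGroup F] [InnerProductSpace ℝ F]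

/-- if `N(e₁) ≤ ⋯ ≤ N(eₙ)`, `N(eⱼ - eᵢ) ≥ N(eⱼ)` for `i < j`, `d > 0`
and `e = (e₁+⋯+eₙ)/d`, then
`N(e) ≤ ((n+1)/(2d²))·(N(e₁)+⋯+N(eₙ)) ≤ (n(n+1)/(2d²))·N(eₙ)`. -/
theorem crude_bound_equal_coeffs (n : ℕ) (hn : 1 ≤ n) (e : Fin n → F)
    (hmono : ∀ i j : Fin n, i ≤ j → Nm (e i) ≤ Nm (e j))
    (hdiff : ∀ i j : Fin n, i < j → Nm (e j) ≤ Nm (e j - e i))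
    (d : ℝ) (hd : 0 < d) :
    Nm (d⁻¹ • ∑ i, e i) ≤ ((n : ℝ) + 1) / (2 * d ^ 2) * ∑ i, Nm (e i) ∧
      ((n : ℝ) + 1) / (2 * d ^ 2) * ∑ i, Nm (e i) ≤
        (n : ℝ) * ((n : ℝ) + 1) / (2 * d ^ 2) * Nm (e ⟨n - 1, by omega⟩) := by
  classical
  have hF0 : ∀ i : Fin n, (0:ℝ) ≤ Nm (e i) := fun i => real_inner_self_nonneg
  have half : ∀ i j : Fin n, i < j → (inner ℝ (e i) (e j) : ℝ) ≤ Nm (e i) / 2 := by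
    intro i j hij
    have h := hdiff i j hij
    have hx : Nm (e j - e i) =
        Nm (e j) - 2 * (inner ℝ (e i) (e j) : ℝ) + Nm (e i) := by
      simp only [Nm, inner_sub_sub_self]
      rw [real_inner_comm (e j) (e i)]; ring
    rw [hx] at h; linarith
  have key : ∀ i j : Fin n, (inner ℝ (e i) (e j) : ℝ) ≤
      (if i ≤ j then Nm (e i) else Nm (e j)) / 2 +
        (if i = j then Nm (e i) / 2 else 0) := by
    intro i j
    rcases lt_trichotomy i j with h | h | h
    · rw [if_pos h.le, if_neg h.ne]
      simpa using half i j h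
    · subst h
      simp [Nm]
    · rw [if_neg (not_le.2 h), if_neg h.ne']
      have := half j i h
      rw [real_inner_comm] at this
      simpa using this
  have hsum : Nm (∑ i, e i) ≤ ∑ i : Fin n, ((n:ℝ) - i.val) * Nm (e i) := by
    have e1 : Nm (∑ i, e i) = ∑ i : Fin n, ∑ j : Fin n, (inner ℝ (e i) (e j) : ℝ) := by
      simp only [Nm, inner_sum, sum_inner]
      exact Finset.sum_comm
    rw [e1]
    calc ∑ i : Fin n, ∑ j : Fin n, (inner ℝ (e i) (e j):ℝ)
        ≤ ∑ i : Fin n, ∑ j : Fin n,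
            ((if i ≤ j then Nm (e i) else Nm (e j)) / 2 +
              (if i = j then Nm (e i) / 2 else 0)) :=
          Finset.sum_le_sum fun i _ => Finset.sum_le_sum fun j _ => key i j
      _ = ∑ i : Fin n, ((n:ℝ) - i.val) * Nm (e i) := ?_
    have split : ∀ i j : Fin n,
        (if i ≤ j then Nm (e i) else Nm (e j)) / 2 + (if i = j then Nm (e i) / 2 else 0)
          = ((if i ≤ j then Nm (e i) / 2 else 0) + (if j < i then Nm (e j) / 2 else 0))
            + (if i = j then Nm (e i) / 2 else 0) := by
      intro i j
      rcases le_or_gt i j with h | h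
      · rw [if_pos h, if_pos h, if_neg (not_lt.2 h)]; ring
      · rw [if_neg (not_le.2 h), if_neg (not_le.2 h), if_pos h]; ring
    simp_rw [split, Finset.sum_add_distrib]
    have c1 : ∀ i : Fin n, (∑ j : Fin n, if i ≤ j then Nm (e i) / 2 else 0)
        = ((n:ℝ) - i.val) * (Nm (e i) / 2) := by
      intro i
      rw [← Finset.sum_filter, Finset.sum_const, nsmul_eq_mul]
      congr 1
      have h0 : (Finset.univ.filter fun j => i ≤ j) = Finset.Ici i := by
        ext j; simp
      rw [h0, Fin.card_Ici]
      have hi : (i : ℕ) < n := i.isLt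
      push_cast [Nat.cast_sub hi.le]
      ring
    have c2 : (∑ i : Fin n, ∑ j : Fin n, if j < i then Nm (e j) / 2 else 0)
        = ∑ i : Fin n, ((n:ℝ) - 1 - i.val) * (Nm (e i) / 2) := by
      rw [Finset.sum_comm]
      apply Finset.sum_congr rfl
      intro i _
      rw [← Finset.sum_filter, Finset.sum_const, nsmul_eq_mul]
      congr 1
      have h0 : (Finset.univ.filter fun j => i < j) = Finset.Ioi i := by
        ext j; simp
      rw [h0, Fin.card_Ioi]
      have hi : (i : ℕ) < n := i.isLt
      rw [show n - 1 - (i:ℕ) = n - ((i:ℕ)+1) by omega, Nat.cast_sub (by omega)]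
      push_cast
      ring
    have c3 : (∑ i : Fin n, ∑ j : Fin n, if i = j then Nm (e i) / 2 else 0)
        = ∑ i : Fin n, Nm (e i) / 2 := by
      apply Finset.sum_congr rfl
      intro i _
      simp
    simp_rw [c1]
    rw [c2, c3, ← Finset.sum_add_distrib, ← Finset.sum_add_distrib]
    apply Finset.sum_congr rfl
    intro i _
    ring
  have hn' : (0:ℝ) < n := by exact_mod_cast hn
  have cheb : ∑ i : Fin n, ((n:ℝ) - i.val) * Nm (e i)
      ≤ ((n:ℝ) + 1) / 2 * ∑ i, Nm (e i) := by
    have hanti : Antivary (fun i : Fin n => ((n:ℝ) - i.val)) (fun i => Nm (e i)) := by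
      intro i j hij
      have hij' : i ≤ j := by
        by_contra h
        exact absurd (hmono j i (le_of_not_ge h)) (not_le.2 hij)
      have hc : (i:ℝ) ≤ (j:ℝ) := by exact_mod_cast hij'
      simp only
      linarith
    have hcard := hanti.card_mul_sum_le_sum_mul_sum
    rw [Fintype.card_fin] at hcard
    have hs1 : (∑ i : Fin n, ((n:ℝ) - i.val)) = (n:ℝ) * ((n:ℝ)+1) / 2 := by
      rw [Finset.sum_sub_distrib, Finset.sum_const, Finset.card_univ, Fintype.card_fin,
        nsmul_eq_mul]
      have h2 : ((∑ i ∈ Finset.range n, i) * 2 : ℕ) = n * (n-1) :=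
        Finset.sum_range_id_mul_two n
      have h3 : (∑ i : Fin n, ((i:ℕ):ℝ)) = (n:ℝ) * ((n:ℝ)-1) / 2 := by
        rw [Fin.sum_univ_eq_sum_range (fun k => ((k:ℕ):ℝ)) n]
        have := congrArg (fun k : ℕ => (k:ℝ)) h2
        push_cast [Nat.cast_sub hn] at this
        linarith
      linarith
    rw [hs1] at hcard
    have hcard' : (n:ℝ) * (∑ i : Fin n, ((n:ℝ) - i.val) * Nm (e i))
        ≤ (n:ℝ) * (((n:ℝ)+1)/2 * ∑ i, Nm (e i)) := by
      calc (n:ℝ) * (∑ i : Fin n, ((n:ℝ) - i.val) * Nm (e i)) ≤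
          (n:ℝ) * ((n:ℝ)+1) / 2 * ∑ i, Nm (e i) := hcard
        _ = (n:ℝ) * (((n:ℝ)+1)/2 * ∑ i, Nm (e i)) := by ring
    exact le_of_mul_le_mul_left hcard' hn'
  have hd2 : (0:ℝ) < d ^ 2 := by positivity
  constructor
  · have h2 : Nm (d⁻¹ • ∑ i, e i) = d⁻¹ ^ 2 * Nm (∑ i, e i) := by
      simp only [Nm, real_inner_smul_left, real_inner_smul_right]
      ring
    rw [h2]
    have hb := hsum.trans cheb
    calc d⁻¹ ^ 2 * Nm (∑ i, e i) ≤ d⁻¹ ^ 2 * (((n:ℝ)+1)/2 * ∑ i, Nm (e i)) := by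
          have : (0:ℝ) ≤ d⁻¹ ^ 2 := by positivity
          exact mul_le_mul_of_nonneg_left hb this
      _ = ((n : ℝ) + 1) / (2 * d ^ 2) * ∑ i, Nm (e i) := by
          have hd0 : d ≠ 0 := hd.ne'
          rw [inv_pow, div_mul_eq_mul_div, div_mul_eq_mul_div, inv_mul_eq_div, div_div]
  · have hlast : ∀ i : Fin n, Nm (e i) ≤ Nm (e ⟨n - 1, by omega⟩) := by
      intro i
      apply hmono
      have hi := i.isLt
      exact Fin.le_def.mpr (by simpa using by omega)
    have hsle : (∑ i, Nm (e i)) ≤ (n:ℝ) * Nm (e ⟨n - 1, by omega⟩) := by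
      calc (∑ i, Nm (e i)) ≤ ∑ _i : Fin n, Nm (e ⟨n - 1, by omega⟩) :=
            Finset.sum_le_sum fun i _ => hlast i
        _ = (n:ℝ) * Nm (e ⟨n - 1, by omega⟩) := by
            rw [Finset.sum_const, Finset.card_univ, Fintype.card_fin, nsmul_eq_mul]
    have hc : (0:ℝ) ≤ ((n : ℝ) + 1) / (2 * d ^ 2) := by positivity
    calc ((n : ℝ) + 1) / (2 * d ^ 2) * ∑ i, Nm (e i)
        ≤ ((n : ℝ) + 1) / (2 * d ^ 2) * ((n:ℝ) * Nm (e ⟨n - 1, by omega⟩)) :=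
          mul_le_mul_of_nonneg_left hsle hc
      _ = (n : ℝ) * ((n : ℝ) + 1) / (2 * d ^ 2) * Nm (e ⟨n - 1, by omega⟩) := by ring

end
end

section
/- Let e_1, …, e_n (n ≥ 1) be vectors of a real inner product space and let S = {(e_1 + ε_2 e_2 + ⋯ + ε_n e_n)/2 : ε_2, …, ε_n ∈ {−1, +1}}. Then there exists x ∈ S with N(x) ≤ (N(e_1) + ⋯ + N(e_n))/4; moreover, the minimum of N over S equals (N(e_1) + ⋯ + N(e_n))/4 if and only if the vectors e_1, …, e_n are pairwise orthogonal. -/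
open scoped BigOperators
noncomputable section

variable {F : Type*} [NormedAddCommGroup F] [InnerProductSpace ℝ F]

lemma Nm_expand {m : ℕ} (e : Fin m → F) (ε : Fin m → ℝ) :
    Nm (∑ i, ε i • e i) = ∑ i, ∑ j, ε i * ε j * (inner ℝ (e i) (e j) : ℝ) := by
  simp only [Nm, sum_inner, inner_sum, real_inner_smul_left, real_inner_smul_right]
  refine Finset.sum_congr rfl fun i _ => Finset.sum_congr rfl fun j _ => by rw [real_inner_comm (e j) (e i)]; ring

lemma Nm_half (x : F) : Nm ((2:ℝ)⁻¹ • x) = Nm x / 4 := by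
  simp only [Nm, real_inner_smul_left, real_inner_smul_right]; ring

lemma four_ident (u x y : F) :
    Nm (x + (y + u)) - Nm (x + (-y + u)) - Nm (-x + (y + u)) + Nm (-x + (-y + u))
      = 8 * (inner ℝ x y : ℝ) := by
  simp only [Nm, inner_add_left, inner_add_right, inner_neg_left, inner_neg_right]
  rw [real_inner_comm y x, real_inner_comm u x, real_inner_comm u y]
  ring

lemma two_ident (w y : F) :
    Nm (y + w) - Nm (-y + w) = 4 * (inner ℝ w y : ℝ) := by
  simp only [Nm, inner_add_left, inner_add_right, inner_neg_left, inner_neg_right]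
  rw [real_inner_comm w y]
  ring

/-- sign vector attached to a boolean vector, with coordinate `z` forced to `1`. -/
def esgn {n : ℕ} (z : Fin n) (s : Fin n → Bool) : Fin n → ℝ :=
  fun i => if i = z then 1 else if s i then 1 else -1

/-- with `S = {(e₁ + ε₂e₂ + ⋯ + εₙeₙ)/2 : εᵢ ∈ {±1}}`, there is an
`x ∈ S` with `N(x) ≤ (N(e₁)+⋯+N(eₙ))/4`; moreover the minimum of `N` over `S`
equals `(N(e₁)+⋯+N(eₙ))/4` iff the `eᵢ` are pairwise orthogonal. -/
theorem half_sum_min_bound (n : ℕ) (hn : 1 ≤ n) (e : Fin n → F)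
    (S : Set F)
    (hS : S = { x | ∃ ε : Fin n → ℝ, (∀ i, ε i = 1 ∨ ε i = -1) ∧ ε ⟨0, by omega⟩ = 1 ∧
      x = (2 : ℝ)⁻¹ • ∑ i, ε i • e i }) :
    (∃ x ∈ S, Nm x ≤ (∑ i, Nm (e i)) / 4) ∧
      (sInf (Nm '' S) = (∑ i, Nm (e i)) / 4 ↔
        ∀ i j : Fin n, i ≠ j → (inner ℝ (e i) (e j) : ℝ) = 0) := by
  have hz : 0 < n := hn
  set z : Fin n := ⟨0, hz⟩ with hzdef
  set c : ℝ := (∑ i, Nm (e i)) / 4 with hc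
  -- basic facts about esgn
  have hesval : ∀ (s : Fin n → Bool) (i : Fin n), esgn z s i = 1 ∨ esgn z s i = -1 := by
    intro s i
    by_cases h : i = z
    · left; simp [esgn, h]
    · cases hsi : s i
      · right; simp [esgn, h, hsi]
      · left; simp [esgn, h, hsi]
  have hes0 : ∀ s : Fin n → Bool, esgn z s z = 1 := by intro s; simp [esgn]
  have hmemS : ∀ s : Fin n → Bool, ((2:ℝ)⁻¹ • ∑ i, esgn z s i • e i) ∈ S := by
    intro s; rw [hS]
    exact ⟨esgn z s, hesval s, hes0 s, rfl⟩
  -- expansion of Nm of a half-sum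
  have hNmg : ∀ ε : Fin n → ℝ, Nm ((2:ℝ)⁻¹ • ∑ i, ε i • e i)
      = (∑ i, ∑ j, ε i * ε j * (inner ℝ (e i) (e j) : ℝ)) / 4 := by
    intro ε; rw [Nm_half, Nm_expand]
  -- pair-cancellation over all boolean vectors
  have hpair : ∀ i j : Fin n, i ≠ j →
      ∑ s : Fin n → Bool, esgn z s i * esgn z s j = 0 := by
    intro i j hij
    obtain ⟨k, hk, hkz⟩ : ∃ k : Fin n, (k = i ∨ k = j) ∧ k ≠ z := by
      by_cases hiz : i = z
      · exact ⟨j, Or.inr rfl, fun h => hij (hiz.trans h.symm)⟩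
      · exact ⟨i, Or.inl rfl, hiz⟩
    have h1 : ∀ (s : Fin n → Bool) (m : Fin n), m ≠ k →
        esgn z (Function.update s k (!s k)) m = esgn z s m := by
      intro s m hm; simp [esgn, Function.update_of_ne hm]
    have h2 : ∀ s : Fin n → Bool,
        esgn z (Function.update s k (!s k)) k = - esgn z s k := by
      intro s; cases hsk : s k <;> simp [esgn, hkz, hsk]
    have hflip : ∀ s : Fin n → Bool,
        esgn z (Function.update s k (!s k)) i * esgn z (Function.update s k (!s k)) j
          = -(esgn z s i * esgn z s j) := by
      intro s
      rcases hk with rfl | rfl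
      · rw [h2, h1 s j (fun h => hij h.symm)]; ring
      · rw [h2, h1 s i hij]; ring
    refine Finset.sum_involution (fun s _ => Function.update s k (!s k))
      (fun s _ => by rw [hflip]; ring) (fun s _ _ => ?_) (fun s _ => Finset.mem_univ _)
      (fun s _ => ?_)
    · intro hcontra
      have := congrFun hcontra k
      simp [Function.update_self] at this
    · funext m
      by_cases hm : m = k
      · subst hm; simp [Function.update_self]
      · simp [Function.update_of_ne hm]
  have hdiag : ∀ i : Fin n, ∑ s : Fin n → Bool, esgn z s i * esgn z s i = (2^n : ℝ) := by
    intro i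
    have h1 : ∀ s : Fin n → Bool, esgn z s i * esgn z s i = 1 := by
      intro s; rcases hesval s i with h | h <;> rw [h] <;> norm_num
    rw [Finset.sum_congr rfl (fun s _ => h1 s), Finset.sum_const]
    simp [Finset.card_univ]
  -- the averaging identity
  have hsum : ∑ s : Fin n → Bool, Nm ((2:ℝ)⁻¹ • ∑ i, esgn z s i • e i) = 2^n * c := by
    calc ∑ s : Fin n → Bool, Nm ((2:ℝ)⁻¹ • ∑ i, esgn z s i • e i)
        = ∑ s : Fin n → Bool, (∑ i, ∑ j, esgn z s i * esgn z s j * (inner ℝ (e i) (e j) : ℝ)) / 4 :=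
          Finset.sum_congr rfl fun s _ => hNmg _
      _ = (∑ i, ∑ j, (∑ s : Fin n → Bool, esgn z s i * esgn z s j) * (inner ℝ (e i) (e j) : ℝ)) / 4 := by
          rw [← Finset.sum_div]
          congr 1
          rw [Finset.sum_comm]
          refine Finset.sum_congr rfl fun i _ => ?_
          rw [Finset.sum_comm]
          refine Finset.sum_congr rfl fun j _ => ?_
          rw [Finset.sum_mul]
      _ = (∑ i, (2^n : ℝ) * (inner ℝ (e i) (e i) : ℝ)) / 4 := by
          congr 1
          refine Finset.sum_congr rfl fun i _ => ?_
          rw [Finset.sum_eq_single i]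
          · rw [hdiag]
          · intro j _ hji
            rw [hpair i j (fun h => hji h.symm), zero_mul]
          · intro h; exact absurd (Finset.mem_univ i) h
      _ = 2^n * c := by
          rw [← Finset.mul_sum, hc]
          have : ∀ i : Fin n, (inner ℝ (e i) (e i) : ℝ) = Nm (e i) := fun i => rfl
          simp only [this]
          ring
  -- existence
  have hex : ∃ s : Fin n → Bool, Nm ((2:ℝ)⁻¹ • ∑ i, esgn z s i • e i) ≤ c := by
    by_contra hcon
    push_neg at hcon
    have hlt : ∑ s : Fin n → Bool, c
        < ∑ s : Fin n → Bool, Nm ((2:ℝ)⁻¹ • ∑ i, esgn z s i • e i) :=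
      Finset.sum_lt_sum_of_nonempty Finset.univ_nonempty fun s _ => hcon s
    rw [hsum, Finset.sum_const, Finset.card_univ, nsmul_eq_mul] at hlt
    have hcard : ((Fintype.card (Fin n → Bool) : ℕ) : ℝ) = 2^n := by
      rw [Fintype.card_fun]; push_cast; simp
    rw [hcard] at hlt
    exact lt_irrefl _ hlt
  -- if orthogonal then Nm is constantly c on S
  have hallc : (∀ i j : Fin n, i ≠ j → (inner ℝ (e i) (e j) : ℝ) = 0) →
      ∀ x ∈ S, Nm x = c := by
    intro horth x hx
    rw [hS] at hx
    obtain ⟨ε, hε, hε0, rfl⟩ := hx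
    rw [hNmg, hc]
    congr 1
    refine Finset.sum_congr rfl fun i _ => ?_
    rw [Finset.sum_eq_single i]
    · rcases hε i with h | h <;> rw [h] <;> simp [Nm]
    · intro j _ hji
      rw [horth i j (fun h => hji h.symm), mul_zero]
    · intro h; exact absurd (Finset.mem_univ i) h
  refine ⟨?_, ?_, ?_⟩
  · obtain ⟨s, hs⟩ := hex
    exact ⟨_, hmemS s, hs⟩
  · -- sInf = c → orthogonality
    intro hinf
    have hbdd : BddBelow (Nm '' S) := by
      refine ⟨0, ?_⟩
      rintro y ⟨x, hx, rfl⟩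
      exact real_inner_self_nonneg
    have hlb : ∀ x ∈ S, c ≤ Nm x := by
      intro x hx
      calc c = sInf (Nm '' S) := hinf.symm
        _ ≤ Nm x := csInf_le hbdd ⟨x, hx, rfl⟩
    have heq : ∀ s : Fin n → Bool, Nm ((2:ℝ)⁻¹ • ∑ i, esgn z s i • e i) = c := by
      have h1 : ∀ s ∈ (Finset.univ : Finset (Fin n → Bool)),
          c ≤ Nm ((2:ℝ)⁻¹ • ∑ i, esgn z s i • e i) := fun s _ => hlb _ (hmemS s)
      have h2 : ∑ s : Fin n → Bool, c
          = ∑ s : Fin n → Bool, Nm ((2:ℝ)⁻¹ • ∑ i, esgn z s i • e i) := by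
        rw [hsum, Finset.sum_const, Finset.card_univ, nsmul_eq_mul, Fintype.card_fun]
        push_cast
        simp
      intro s
      exact ((Finset.sum_eq_sum_iff_of_le h1).mp h2 s (Finset.mem_univ s)).symm
    have hval : ∀ ε : Fin n → ℝ, (∀ i, ε i = 1 ∨ ε i = -1) → ε z = 1 →
        Nm ((2:ℝ)⁻¹ • ∑ i, ε i • e i) = c := by
      intro ε hε hε0
      have hfe : esgn z (fun i => decide (ε i = 1)) = ε := by
        funext i
        by_cases hiz : i = z
        · subst hiz; simp [esgn, hε0]
        · rcases hε i with h | h <;> norm_num [esgn, hiz, h]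
      rw [← hfe]; exact heq _
    have hmain : ∀ i j : Fin n, i ≠ z → j ≠ z → i ≠ j → (inner ℝ (e i) (e j) : ℝ) = 0 := by
      intro i j hiz hjz hij
      set u : F := ∑ p ∈ (Finset.univ.erase i).erase j, e p with hu
      have hsplit : ∀ a b : ℝ,
          ∑ p, (if p = i then a else if p = j then b else 1) • e p
            = a • e i + (b • e j + u) := by
        intro a b
        rw [← Finset.add_sum_erase _ _ (Finset.mem_univ i)]
        congr 1
        · simp
        rw [← Finset.add_sum_erase _ (fun p => (if p = i then a else if p = j then b else 1) • e p)
            (Finset.mem_erase.mpr ⟨Ne.symm hij, Finset.mem_univ j⟩)]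
        congr 1
        · simp [Ne.symm hij]
        · refine Finset.sum_congr rfl fun p hp => ?_
          have hpj : p ≠ j := (Finset.mem_erase.mp hp).1
          have hpi : p ≠ i := (Finset.mem_erase.mp (Finset.mem_erase.mp hp).2).1
          simp [hpi, hpj]
      have hpat : ∀ a b : ℝ, (a = 1 ∨ a = -1) → (b = 1 ∨ b = -1) →
          Nm (a • e i + (b • e j + u)) = 4 * c := by
        intro a b ha hb
        have hv := hval (fun p => if p = i then a else if p = j then b else 1)
          (fun p => by
            by_cases h1 : p = i
            · subst h1; simpa using ha
            by_cases h2 : p = j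
            · subst h2; simpa [h1] using hb
            · simp [h1, h2])
          (by simp [Ne.symm hiz, Ne.symm hjz])
        rw [hsplit, Nm_half] at hv
        linarith
      have h11 := hpat 1 1 (Or.inl rfl) (Or.inl rfl)
      have h1m := hpat 1 (-1) (Or.inl rfl) (Or.inr rfl)
      have hm1 := hpat (-1) 1 (Or.inr rfl) (Or.inl rfl)
      have hmm := hpat (-1) (-1) (Or.inr rfl) (Or.inr rfl)
      simp only [one_smul, neg_one_smul] at h11 h1m hm1 hmm
      linarith [four_ident u (e i) (e j), h11, h1m, hm1, hmm]
    have hzero : ∀ j : Fin n, j ≠ z → (inner ℝ (e z) (e j) : ℝ) = 0 := by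
      intro j hjz
      set w : F := ∑ p ∈ Finset.univ.erase j, e p with hw
      have hsplit : ∀ b : ℝ, ∑ p, (if p = j then b else 1) • e p = b • e j + w := by
        intro b
        rw [← Finset.add_sum_erase _ _ (Finset.mem_univ j)]
        congr 1
        · simp
        · exact Finset.sum_congr rfl fun p hp => by simp [(Finset.mem_erase.mp hp).1]
      have hpat : ∀ b : ℝ, (b = 1 ∨ b = -1) → Nm (b • e j + w) = 4 * c := by
        intro b hb
        have hv := hval (fun p => if p = j then b else 1)
          (fun p => by
            by_cases h1 : p = j
            · subst h1; simpa using hb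
            · simp [h1])
          (by simp [Ne.symm hjz])
        rw [hsplit, Nm_half] at hv
        linarith
      have h1 := hpat 1 (Or.inl rfl)
      have hm := hpat (-1) (Or.inr rfl)
      simp only [one_smul, neg_one_smul] at h1 hm
      have hperp : (inner ℝ w (e j) : ℝ) = 0 := by
        have := two_ident w (e j); linarith
      have hw2 : (inner ℝ w (e j) : ℝ)
          = inner ℝ (e z) (e j) + ∑ p ∈ (Finset.univ.erase j).erase z, (inner ℝ (e p) (e j) : ℝ) := by
        rw [hw, sum_inner, ← Finset.add_sum_erase _ _
          (Finset.mem_erase.mpr ⟨Ne.symm hjz, Finset.mem_univ z⟩)]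
      have hrest : ∑ p ∈ (Finset.univ.erase j).erase z, (inner ℝ (e p) (e j) : ℝ) = 0 := by
        refine Finset.sum_eq_zero fun p hp => ?_
        have hpz : p ≠ z := (Finset.mem_erase.mp hp).1
        have hpj : p ≠ j := (Finset.mem_erase.mp (Finset.mem_erase.mp hp).2).1
        exact hmain p j hpz hjz hpj
      rw [hw2, hrest, add_zero] at hperp
      exact hperp
    intro i j hij
    by_cases hiz : i = z
    · subst hiz; exact hzero j (Ne.symm hij)
    by_cases hjz : j = z
    · subst hjz; rw [real_inner_comm]; exact hzero i hiz
    · exact hmain i j hiz hjz hij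
  · -- orthogonality → sInf = c
    intro horth
    have hallc2 := hallc horth
    have himg : Nm '' S = {c} := by
      apply Set.eq_singleton_iff_unique_mem.mpr
      refine ⟨⟨_, hmemS (fun _ => true), hallc2 _ (hmemS _)⟩, ?_⟩
      rintro y ⟨x, hx, rfl⟩
      exact hallc2 x hx
    rw [himg]
    exact csInf_singleton c

end
end

section
/- Let n ≥ 4 and let e_1, …, e_n be vectors of a real inner product space with N(e_m) ≤ 1 for all m; set e = (e_1 + ⋯ + e_n)/2 and t = N(e). Then there exist pairwise distinct indices i, j, k such that, writing u = N(e − e_i), v = N(e − e_i − e_j) and w = N(e − e_i − e_j − e_k): (a) u ≤ (n + (n−4)t)/n; (b) v ≤ (n + (n−4)u − t)/(n−1); (c) w ≤ (n + (n−4)v − 2u)/(n−2); moreover i may be chosen so that u ≤ N(e − e_m) for every m, and then for every integer ℓ > 0 one has N(e − ℓe_i) ≤ ℓu − (ℓ−1)t + ℓ(ℓ−1). -/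
open scoped BigOperators
noncomputable section

variable {F : Type*} [NormedAddCommGroup F] [InnerProductSpace ℝ F]

set_option maxHeartbeats 1000000

open Finset

lemma Nm_sub (x y : F) : Nm (x - y) = Nm x - 2 * inner ℝ x y + Nm y :=
  real_inner_sub_sub_self x y

lemma sum_Nm_sub {ι : Type*} (s : Finset ι) (f : ι → F) (a : F) :
    ∑ m ∈ s, Nm (a - f m)
      = (s.card : ℝ) * Nm a - 2 * (inner ℝ a (∑ m ∈ s, f m) : ℝ) + ∑ m ∈ s, Nm (f m) := by
  simp only [Nm_sub, Finset.sum_add_distrib, Finset.sum_sub_distrib, Finset.sum_const,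
    inner_sum, ← Finset.mul_sum, nsmul_eq_mul]

/-- let `n ≥ 4`, `N(eₘ) ≤ 1` for all `m`, `e = (e₁+⋯+eₙ)/2` and
`t = N(e)`. Then there are pairwise distinct indices `i, j, k` with, writing
`u = N(e-eᵢ)`, `v = N(e-eᵢ-eⱼ)`, `w = N(e-eᵢ-eⱼ-eₖ)`:
(a) `u ≤ (n+(n-4)t)/n`; (b) `v ≤ (n+(n-4)u-t)/(n-1)`;
(c) `w ≤ (n+(n-4)v-2u)/(n-2)`; moreover `i` may be chosen so that
`u ≤ N(e-eₘ)` for all `m`, and then `N(e-ℓeᵢ) ≤ ℓu-(ℓ-1)t+ℓ(ℓ-1)` for all `ℓ > 0`. -/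
theorem lemma_tuvw (n : ℕ) (hn : 4 ≤ n) (e : Fin n → F)
    (he : ∀ m, Nm (e m) ≤ 1)
    (v : F) (hv : v = (2 : ℝ)⁻¹ • ∑ m, e m) :
    ∃ i j k : Fin n, i ≠ j ∧ i ≠ k ∧ j ≠ k ∧
      Nm (v - e i) ≤ ((n : ℝ) + ((n : ℝ) - 4) * Nm v) / n ∧
      Nm (v - e i - e j) ≤
        ((n : ℝ) + ((n : ℝ) - 4) * Nm (v - e i) - Nm v) / ((n : ℝ) - 1) ∧
      Nm (v - e i - e j - e k) ≤
        ((n : ℝ) + ((n : ℝ) - 4) * Nm (v - e i - e j) - 2 * Nm (v - e i)) / ((n : ℝ) - 2) ∧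
      (∀ m : Fin n, Nm (v - e i) ≤ Nm (v - e m)) ∧
      ∀ ℓ : ℕ, 0 < ℓ →
        Nm (v - (ℓ : ℝ) • e i) ≤
          (ℓ : ℝ) * Nm (v - e i) - ((ℓ : ℝ) - 1) * Nm v + (ℓ : ℝ) * ((ℓ : ℝ) - 1) := by
  have hn0 : (0:ℝ) < (n:ℝ) := by exact_mod_cast Nat.lt_of_lt_of_le (by norm_num) hn
  have hn4 : (4:ℝ) ≤ (n:ℝ) := by exact_mod_cast hn
  have hs : ∑ m, e m = (2:ℝ) • v := by
    rw [hv, smul_smul]; norm_num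
  have hqsum : ∑ m, Nm (e m) ≤ (n:ℝ) := by
    calc ∑ m, Nm (e m) ≤ (univ.card : ℕ) • (1:ℝ) :=
          Finset.sum_le_card_nsmul _ _ _ (fun m _ => he m)
      _ = (n:ℝ) := by simp
  -- choose i
  obtain ⟨i, -, hi_min⟩ := Finset.exists_min_image Finset.univ (fun m => Nm (v - e m))
    ⟨⟨0, by omega⟩, Finset.mem_univ _⟩
  simp only [Finset.mem_univ, forall_true_left] at hi_min
  have hU : Nm (v - e i) = Nm v - 2 * (inner ℝ v (e i) : ℝ) + Nm (e i) := Nm_sub v (e i)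
  have hqi : Nm (e i) ≤ 1 := he i
  -- (a)
  have hSa : ∑ m, Nm (v - e m) = (n:ℝ) * Nm v - 4 * Nm v + ∑ m, Nm (e m) := by
    rw [sum_Nm_sub, hs, real_inner_smul_right]
    simp only [Finset.card_univ, Fintype.card_fin, Nm]
    ring
  have hAa : (n:ℝ) * Nm (v - e i) ≤ (n:ℝ) + ((n:ℝ) - 4) * Nm v := by
    have h1 : (univ.card : ℕ) • Nm (v - e i) ≤ ∑ m, Nm (v - e m) :=
      Finset.card_nsmul_le_sum _ _ _ (fun m _ => hi_min m)
    simp only [Finset.card_univ, Fintype.card_fin, nsmul_eq_mul] at h1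
    rw [hSa] at h1
    nlinarith [hqsum]
  have ha : Nm (v - e i) ≤ ((n:ℝ) + ((n:ℝ) - 4) * Nm v) / n := by
    rw [le_div_iff₀ hn0]; nlinarith
  -- choose j
  have hcard1 : (Finset.univ.erase i).card = n - 1 := by
    rw [Finset.card_erase_of_mem (Finset.mem_univ i)]; simp
  obtain ⟨j, hj_mem, hj_min⟩ := Finset.exists_min_image (Finset.univ.erase i)
    (fun m => Nm (v - e i - e m))
    (by rw [← Finset.card_pos, hcard1]; omega)
  have hji : j ≠ i := Finset.ne_of_mem_erase hj_mem
  have hes1 : ∑ m ∈ Finset.univ.erase i, e m = (2:ℝ) • v - e i := by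
    rw [Finset.sum_erase_eq_sub (Finset.mem_univ i), hs]
  have hq1 : ∑ m ∈ Finset.univ.erase i, Nm (e m) = (∑ m, Nm (e m)) - Nm (e i) :=
    Finset.sum_erase_eq_sub (Finset.mem_univ i)
  have hinner1 : (inner ℝ (v - e i) ((2:ℝ) • v - e i) : ℝ)
      = 2 * Nm v - 3 * (inner ℝ v (e i) : ℝ) + Nm (e i) := by
    simp only [inner_sub_left, inner_sub_right, real_inner_smul_right,
      real_inner_comm v (e i), Nm]
    ring
  have hc1 : ((n - 1 : ℕ) : ℝ) = (n:ℝ) - 1 := by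
    have h : (1:ℕ) ≤ n := by omega
    push_cast [h]; ring
  have hSb : ∑ m ∈ Finset.univ.erase i, Nm (v - e i - e m)
      = ((n:ℝ) - 1) * Nm (v - e i)
        - 2 * (2 * Nm v - 3 * (inner ℝ v (e i) : ℝ) + Nm (e i))
        + ((∑ m, Nm (e m)) - Nm (e i)) := by
    have h := sum_Nm_sub (Finset.univ.erase i) e (v - e i)
    rw [hcard1, hes1, hq1, hinner1, hc1] at h
    exact h
  have hb : Nm (v - e i - e j)
      ≤ ((n:ℝ) + ((n:ℝ) - 4) * Nm (v - e i) - Nm v) / ((n:ℝ) - 1) := by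
    have h1 : ((Finset.univ.erase i).card : ℕ) • Nm (v - e i - e j)
        ≤ ∑ m ∈ Finset.univ.erase i, Nm (v - e i - e m) :=
      Finset.card_nsmul_le_sum _ _ _ (fun m hm => hj_min m hm)
    rw [hcard1, nsmul_eq_mul, hc1, hSb] at h1
    rw [le_div_iff₀ (by linarith : (0:ℝ) < (n:ℝ) - 1)]
    nlinarith [hqsum, hU]
  -- choose k
  have hcard2 : ((Finset.univ.erase i).erase j).card = n - 2 := by
    rw [Finset.card_erase_of_mem hj_mem, hcard1]
    omega
  obtain ⟨k, hk_mem, hk_min⟩ := Finset.exists_min_image ((Finset.univ.erase i).erase j)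
    (fun m => Nm (v - e i - e j - e m))
    (by rw [← Finset.card_pos, hcard2]; omega)
  have hkj : k ≠ j := Finset.ne_of_mem_erase hk_mem
  have hki : k ≠ i := Finset.ne_of_mem_erase (Finset.mem_of_mem_erase hk_mem)
  have hUj : Nm (v - e j) = Nm v - 2 * (inner ℝ v (e j) : ℝ) + Nm (e j) := Nm_sub v (e j)
  have hij_min : Nm (v - e i) ≤ Nm v - 2 * (inner ℝ v (e j) : ℝ) + Nm (e j) := by
    rw [← hUj]; exact hi_min j
  have hqj : Nm (e j) ≤ 1 := he j
  have hes2 : ∑ m ∈ (Finset.univ.erase i).erase j, e m = (2:ℝ) • v - e i - e j := by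
    rw [Finset.sum_erase_eq_sub hj_mem, hes1]
  have hq2 : ∑ m ∈ (Finset.univ.erase i).erase j, Nm (e m)
      = (∑ m, Nm (e m)) - Nm (e i) - Nm (e j) := by
    rw [Finset.sum_erase_eq_sub hj_mem, hq1]
  have hinner2 : (inner ℝ (v - e i - e j) ((2:ℝ) • v - e i - e j) : ℝ)
      = Nm (v - e i - e j) + (Nm v - (inner ℝ v (e i) : ℝ) - (inner ℝ v (e j) : ℝ)) := by
    have h1 : ((2:ℝ) • v - e i - e j) = (v - e i - e j) + v := by
      rw [two_smul]; abel
    rw [h1, inner_add_right]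
    have h2 : (inner ℝ (v - e i - e j) v : ℝ)
        = Nm v - (inner ℝ v (e i) : ℝ) - (inner ℝ v (e j) : ℝ) := by
      simp only [inner_sub_left, real_inner_comm v (e i), real_inner_comm v (e j), Nm]
    rw [h2]; rfl
  have hc2 : ((n - 2 : ℕ) : ℝ) = (n:ℝ) - 2 := by
    have h : (2:ℕ) ≤ n := by omega
    push_cast [h]; ring
  have hSc : ∑ m ∈ (Finset.univ.erase i).erase j, Nm (v - e i - e j - e m)
      = ((n:ℝ) - 2) * Nm (v - e i - e j)
        - 2 * (Nm (v - e i - e j) + (Nm v - (inner ℝ v (e i) : ℝ) - (inner ℝ v (e j) : ℝ)))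
        + ((∑ m, Nm (e m)) - Nm (e i) - Nm (e j)) := by
    have h := sum_Nm_sub ((Finset.univ.erase i).erase j) e (v - e i - e j)
    rw [hcard2, hes2, hq2, hinner2, hc2] at h
    exact h
  have hcres : Nm (v - e i - e j - e k)
      ≤ ((n:ℝ) + ((n:ℝ) - 4) * Nm (v - e i - e j) - 2 * Nm (v - e i)) / ((n:ℝ) - 2) := by
    have h1 : (((Finset.univ.erase i).erase j).card : ℕ) • Nm (v - e i - e j - e k)
        ≤ ∑ m ∈ (Finset.univ.erase i).erase j, Nm (v - e i - e j - e m) :=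
      Finset.card_nsmul_le_sum _ _ _ (fun m hm => hk_min m hm)
    rw [hcard2, nsmul_eq_mul, hc2, hSc] at h1
    rw [le_div_iff₀ (by linarith : (0:ℝ) < (n:ℝ) - 2)]
    nlinarith [hqsum, hU, hij_min]
  refine ⟨i, j, k, hji.symm, hki.symm, hkj.symm, ha, hb, hcres, fun m => hi_min m, ?_⟩
  intro ℓ hℓ
  have hL1 : (1:ℝ) ≤ (ℓ:ℝ) := by exact_mod_cast hℓ
  have hexp : Nm (v - (ℓ:ℝ) • e i)
      = Nm v - 2 * (ℓ:ℝ) * (inner ℝ v (e i) : ℝ) + (ℓ:ℝ)^2 * Nm (e i) := by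
    rw [Nm_sub, real_inner_smul_right]
    have h3 : Nm ((ℓ:ℝ) • e i) = (ℓ:ℝ)^2 * Nm (e i) := by
      simp only [Nm, real_inner_smul_right, real_inner_smul_left]
      ring
    rw [h3]; ring
  rw [hexp]
  have hkey : (0:ℝ) ≤ (ℓ:ℝ) * ((ℓ:ℝ) - 1) * (1 - Nm (e i)) :=
    mul_nonneg (mul_nonneg (by linarith) (by linarith)) (by linarith)
  nlinarith [hU]

end
end

section
/- Let d ≥ 3 and n be integers with d + 2 ≤ n ≤ 3d + 1, let e_1, …, e_n be vectors of a real inner product space with N(e_m) ≤ 1 for all m, set e = (e_1 + ⋯ + e_n)/d, and assume N(e) ≥ 1 and N(e − e_i − e_n) ≥ 1 for every i < n. Then there exists a vector y, equal either to e or to e − e_i − e_j for some indices i < j ≤ n−1, such that N(y) ≤ (n² − 3n + 1) / ((2d−1)n − (d² + 2d − 1)). -/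
open scoped BigOperators
open scoped InnerProductSpace
noncomputable section

variable {F : Type*} [NormedAddCommGroup F] [InnerProductSpace ℝ F]

/-- let `d ≥ 3`, `d+2 ≤ n ≤ 3d+1`, `N(eₘ) ≤ 1` for all `m`,
`e = (e₁+⋯+eₙ)/d`, `N(e) ≥ 1` and `N(e-eᵢ-eₙ) ≥ 1` for all `i < n`. Then some
vector `y`, equal to `e` or to some `e-eᵢ-eⱼ` with `i < j ≤ n-1`, satisfies
`N(y) ≤ (n²-3n+1)/((2d-1)n-(d²+2d-1))`. -/
theorem psi_bound (d n : ℕ) (hd : 3 ≤ d) (hn1 : d + 2 ≤ n) (hn2 : n ≤ 3 * d + 1)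
    (e : Fin n → F) (he : ∀ m, Nm (e m) ≤ 1)
    (v : F) (hv : v = ((d : ℝ))⁻¹ • ∑ i, e i) (hve : 1 ≤ Nm v)
    (hlast : ∀ i : Fin n, (i : ℕ) < n - 1 → 1 ≤ Nm (v - e i - e ⟨n - 1, by omega⟩)) :
    ∃ y : F,
      (y = v ∨ ∃ i j : Fin n, i < j ∧ (j : ℕ) < n - 1 ∧ y = v - e i - e j) ∧
      Nm y ≤ ((n : ℝ) ^ 2 - 3 * (n : ℝ) + 1) /
        ((2 * (d : ℝ) - 1) * (n : ℝ) - ((d : ℝ) ^ 2 + 2 * (d : ℝ) - 1)) := by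
  set c : ℝ := ((n : ℝ) ^ 2 - 3 * (n : ℝ) + 1) /
      ((2 * (d : ℝ) - 1) * (n : ℝ) - ((d : ℝ) ^ 2 + 2 * (d : ℝ) - 1)) with hcdef
  by_contra hcon
  push_neg at hcon
  have hn5 : 5 ≤ n := by omega
  -- cast facts
  have hdR : (3 : ℝ) ≤ (d : ℝ) := by exact_mod_cast hd
  have hn1R : (d : ℝ) + 2 ≤ (n : ℝ) := by exact_mod_cast hn1
  have hn2R : (n : ℝ) ≤ 3 * (d : ℝ) + 1 := by exact_mod_cast hn2
  have hnR : (5 : ℝ) ≤ (n : ℝ) := by exact_mod_cast hn5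
  set m : Fin n := ⟨n - 1, by omega⟩ with hmdef
  have hcv : c < Nm v := hcon v (Or.inl rfl)
  have hcij : ∀ i j : Fin n, i ≠ j → (i : ℕ) < n - 1 → (j : ℕ) < n - 1 →
      c < Nm (v - e i - e j) := by
    intro i j hij hi hj
    rcases lt_or_gt_of_ne hij with h | h
    · exact hcon _ (Or.inr ⟨i, j, h, hj, rfl⟩)
    · have h2 := hcon _ (Or.inr ⟨j, i, h, hi, rfl⟩)
      rwa [sub_right_comm v (e j) (e i)] at h2
  have hlt_m : ∀ i : Fin n, i ≠ m → (i : ℕ) < n - 1 := by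
    intro i hi
    have := i.isLt
    have : (i : ℕ) ≠ n - 1 := fun h => hi (Fin.ext h)
    omega
  have hm1 : ∀ i : Fin n, i ≠ m → 1 ≤ Nm (v - e i - e m) := fun i hi =>
    hlast i (hlt_m i hi)
  -- scalar set-up
  set S : ℝ := ∑ i, Nm (e i) with hSdef
  have hS : S ≤ (n : ℝ) := by
    calc S ≤ ∑ _i : Fin n, (1 : ℝ) := Finset.sum_le_sum fun i _ => he i
    _ = n := by simp
  have hd0 : (d : ℝ) ≠ 0 := by positivity
  have hsum : ∑ i, e i = (d : ℝ) • v := by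
    rw [hv, smul_smul, mul_inv_cancel₀ hd0, one_smul]
  have ha : ∑ i, ⟪v, e i⟫_ℝ = (d : ℝ) * Nm v := by
    rw [← inner_sum, hsum, real_inner_smul_right]; rfl
  have hexp : ∀ x y : F, Nm (v - x - y) =
      Nm v + Nm x + Nm y + 2 * ⟪x, y⟫_ℝ - 2 * ⟪v, x⟫_ℝ - 2 * ⟪v, y⟫_ℝ := by
    intro x y
    show ⟪v - x - y, v - x - y⟫_ℝ = _
    simp only [inner_sub_left, inner_sub_right]
    rw [real_inner_comm x v, real_inner_comm y v, real_inner_comm y x]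
    unfold Nm
    ring
  have hbrow : ∀ i : Fin n, ∑ j, ⟪e i, e j⟫_ℝ = (d : ℝ) * ⟪v, e i⟫_ℝ := by
    intro i
    rw [← inner_sum, hsum, real_inner_smul_right, real_inner_comm]
  -- inner sum identity
  have inner_eq : ∀ i : Fin n,
      ∑ j, Nm (v - e i - e j) =
        (n : ℝ) * Nm v + (n : ℝ) * Nm (e i) + S
          + (2 * (d : ℝ) - 2 * (n : ℝ)) * ⟪v, e i⟫_ℝ - 2 * (d : ℝ) * Nm v := by
    intro i
    simp_rw [hexp]
    rw [Finset.sum_sub_distrib, Finset.sum_sub_distrib, Finset.sum_add_distrib,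
      Finset.sum_add_distrib, Finset.sum_add_distrib, Finset.sum_const, Finset.sum_const,
      Finset.sum_const, ← Finset.mul_sum, ← Finset.mul_sum, hbrow, ha]
    simp only [Finset.card_univ, Fintype.card_fin, nsmul_eq_mul, ← hSdef]
    ring
  -- full double-sum identity
  have hTfull : ∑ i : Fin n, ∑ j, Nm (v - e i - e j) =
      ((n : ℝ) ^ 2 + 2 * (d : ℝ) ^ 2 - 4 * (n : ℝ) * (d : ℝ)) * Nm v + 2 * (n : ℝ) * S := by
    simp_rw [inner_eq]
    rw [Finset.sum_sub_distrib, Finset.sum_add_distrib, Finset.sum_add_distrib,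
      Finset.sum_add_distrib, Finset.sum_const, Finset.sum_const, Finset.sum_const,
      ← Finset.mul_sum, ← Finset.mul_sum, ha]
    simp only [Finset.card_univ, Fintype.card_fin, nsmul_eq_mul, ← hSdef]
    ring
  have hDiag : ∑ i : Fin n, Nm (v - e i - e i) =
      (n : ℝ) * Nm v + 4 * S - 4 * (d : ℝ) * Nm v := by
    have : ∀ i : Fin n, Nm (v - e i - e i) = Nm v + 4 * Nm (e i) - 4 * ⟪v, e i⟫_ℝ := by
      intro i
      rw [hexp]
      have : ⟪e i, e i⟫_ℝ = Nm (e i) := rfl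
      rw [this]; ring
    simp_rw [this]
    rw [Finset.sum_sub_distrib, Finset.sum_add_distrib, Finset.sum_const,
      ← Finset.mul_sum, ← Finset.mul_sum, ha]
    simp only [Finset.card_univ, Fintype.card_fin, nsmul_eq_mul, ← hSdef]
    ring
  -- the off-diagonal sum
  have hId : ∑ i : Fin n, ∑ j ∈ Finset.univ.erase i, Nm (v - e i - e j) =
      ((n : ℝ) ^ 2 - (n : ℝ) + 2 * (d : ℝ) ^ 2 + 4 * (d : ℝ) - 4 * (n : ℝ) * (d : ℝ)) * Nm v
        + (2 * (n : ℝ) - 4) * S := by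
    have h1 : ∀ i : Fin n, ∑ j ∈ Finset.univ.erase i, Nm (v - e i - e j) =
        (∑ j, Nm (v - e i - e j)) - Nm (v - e i - e i) := fun i =>
      Finset.sum_erase_eq_sub (Finset.mem_univ i)
    simp_rw [h1]
    rw [Finset.sum_sub_distrib, hTfull, hDiag]
    ring
  -- lower bound via counting
  set i₀ : Fin n := ⟨0, by omega⟩ with hi0def
  have hi0m : i₀ ≠ m := by
    intro h
    have : (0 : ℕ) = n - 1 := congrArg Fin.val h
    omega
  have hrow_m : ((n : ℝ) - 1) ≤ ∑ j ∈ Finset.univ.erase m, Nm (v - e m - e j) := by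
    have hb : ∀ j ∈ Finset.univ.erase m, (1 : ℝ) ≤ Nm (v - e m - e j) := by
      intro j hj
      rw [sub_right_comm]
      exact hm1 j (Finset.ne_of_mem_erase hj)
    calc ((n : ℝ) - 1) = ((Finset.univ.erase m).card : ℝ) * 1 := by
          rw [Finset.card_erase_of_mem (Finset.mem_univ m), Finset.card_univ,
            Fintype.card_fin, Nat.cast_sub (by omega : 1 ≤ n)]
          push_cast
          ring
      _ = ∑ _j ∈ Finset.univ.erase m, (1 : ℝ) := by rw [Finset.sum_const, nsmul_eq_mul]
      _ ≤ _ := Finset.sum_le_sum hb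
  have hrow_ne : ∀ i : Fin n, i ≠ m →
      1 + ((n : ℝ) - 2) * c < ∑ j ∈ Finset.univ.erase i, Nm (v - e i - e j) := by
    intro i him
    have hmem : m ∈ Finset.univ.erase i := Finset.mem_erase.2 ⟨Ne.symm him, Finset.mem_univ m⟩
    rw [← Finset.add_sum_erase _ _ hmem]
    have hfirst : (1 : ℝ) ≤ Nm (v - e i - e m) := hm1 i him
    have hcardN : ((Finset.univ.erase i).erase m).card = n - 2 := by
      rw [Finset.card_erase_of_mem hmem, Finset.card_erase_of_mem (Finset.mem_univ i),
        Finset.card_univ, Fintype.card_fin]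
      omega
    have hcard : (((Finset.univ.erase i).erase m).card : ℝ) = (n : ℝ) - 2 := by
      rw [hcardN, Nat.cast_sub (by omega : 2 ≤ n)]
      push_cast
      ring
    have hne : ((Finset.univ.erase i).erase m).Nonempty := by
      rw [← Finset.card_pos, hcardN]
      omega
    have hter : ∀ j ∈ (Finset.univ.erase i).erase m, c < Nm (v - e i - e j) := by
      intro j hj
      have hjm : j ≠ m := Finset.ne_of_mem_erase hj
      have hji : j ≠ i := Finset.ne_of_mem_erase (Finset.mem_of_mem_erase hj)
      exact hcij i j (Ne.symm hji) (hlt_m i him) (hlt_m j hjm)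
    have hrest := Finset.sum_lt_sum_of_nonempty hne hter
    rw [Finset.sum_const, nsmul_eq_mul, hcard] at hrest
    linarith
  have hlow : ((n : ℝ) - 1) + ((n : ℝ) - 1) * (1 + ((n : ℝ) - 2) * c) <
      ∑ i : Fin n, ∑ j ∈ Finset.univ.erase i, Nm (v - e i - e j) := by
    have hL : ∀ i : Fin n, (if i = m then ((n : ℝ) - 1) else 1 + ((n : ℝ) - 2) * c) ≤
        ∑ j ∈ Finset.univ.erase i, Nm (v - e i - e j) := by
      intro i
      by_cases h : i = m
      · subst h; simp only [if_pos rfl]; exact hrow_m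
      · simp only [if_neg h]; exact le_of_lt (hrow_ne i h)
    have hstrict : (if i₀ = m then ((n : ℝ) - 1) else 1 + ((n : ℝ) - 2) * c) <
        ∑ j ∈ Finset.univ.erase i₀, Nm (v - e i₀ - e j) := by
      simp only [if_neg hi0m]; exact hrow_ne i₀ hi0m
    have hsum_lt := Finset.sum_lt_sum (s := Finset.univ)
      (f := fun i => if i = m then ((n : ℝ) - 1) else 1 + ((n : ℝ) - 2) * c)
      (g := fun i => ∑ j ∈ Finset.univ.erase i, Nm (v - e i - e j))
      (fun i _ => hL i) ⟨i₀, Finset.mem_univ i₀, hstrict⟩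
    have hLsum : ∑ i : Fin n, (if i = m then ((n : ℝ) - 1) else 1 + ((n : ℝ) - 2) * c) =
        ((n : ℝ) - 1) + ((n : ℝ) - 1) * (1 + ((n : ℝ) - 2) * c) := by
      rw [← Finset.add_sum_erase _ _ (Finset.mem_univ m), if_pos rfl]
      congr 1
      rw [Finset.sum_congr rfl (fun j hj => if_neg (Finset.ne_of_mem_erase hj)),
        Finset.sum_const, nsmul_eq_mul, Finset.card_erase_of_mem (Finset.mem_univ m),
        Finset.card_univ, Fintype.card_fin, Nat.cast_sub (by omega : 1 ≤ n)]
      push_cast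
      ring
    linarith [hsum_lt, hLsum.ge]
  -- upper bound
  have hA : ((n : ℝ) ^ 2 - (n : ℝ) + 2 * (d : ℝ) ^ 2 + 4 * (d : ℝ) - 4 * (n : ℝ) * (d : ℝ)) ≤ 0 := by
    nlinarith [mul_nonneg (sub_nonneg.2 hn1R) (sub_nonneg.2 hn2R)]
  have hDden : 0 < (2 * (d : ℝ) - 1) * (n : ℝ) - ((d : ℝ) ^ 2 + 2 * (d : ℝ) - 1) := by
    nlinarith
  have hcD : c * ((2 * (d : ℝ) - 1) * (n : ℝ) - ((d : ℝ) ^ 2 + 2 * (d : ℝ) - 1)) =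
      (n : ℝ) ^ 2 - 3 * (n : ℝ) + 1 := by
    rw [hcdef]; exact div_mul_cancel₀ _ (ne_of_gt hDden)
  have hup : ∑ i : Fin n, ∑ j ∈ Finset.univ.erase i, Nm (v - e i - e j) ≤
      ((n : ℝ) ^ 2 - (n : ℝ) + 2 * (d : ℝ) ^ 2 + 4 * (d : ℝ) - 4 * (n : ℝ) * (d : ℝ)) * c
        + (2 * (n : ℝ) - 4) * (n : ℝ) := by
    rw [hId]
    have h1 : ((n : ℝ) ^ 2 - (n : ℝ) + 2 * (d : ℝ) ^ 2 + 4 * (d : ℝ) - 4 * (n : ℝ) * (d : ℝ)) * Nm v ≤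
        ((n : ℝ) ^ 2 - (n : ℝ) + 2 * (d : ℝ) ^ 2 + 4 * (d : ℝ) - 4 * (n : ℝ) * (d : ℝ)) * c :=
      mul_le_mul_of_nonpos_left (le_of_lt hcv) hA
    have h2 : (2 * (n : ℝ) - 4) * S ≤ (2 * (n : ℝ) - 4) * (n : ℝ) :=
      mul_le_mul_of_nonneg_left hS (by linarith)
    linarith
  have hT := hlow.trans_le hup
  have key : ((n : ℝ) - 1) * ((n : ℝ) - 2) * c -
      ((n : ℝ) ^ 2 - (n : ℝ) + 2 * (d : ℝ) ^ 2 + 4 * (d : ℝ) - 4 * (n : ℝ) * (d : ℝ)) * c =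
      2 * ((n : ℝ) ^ 2 - 3 * (n : ℝ) + 1) := by
    linear_combination 2 * hcD
  linarith [hT, key]

end
end
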